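/- Nested forward invariance (strengthening of Proposition 1 stated in the paper). Suppose that (∂h_i/∂u)(x,u) = 0 for all (x,u) ∈ ℝ^n × ℝ^m and all i < r. Let α, γ > 0 and let ξ : [0,∞) → ℝ^n and υ : [0,∞) → ℝ^m be differentiable functions such that for all t ≥ 0: ξ'(t) = f(ξ(t),υ(t)), ⟨∇b(υ(t)), υ'(t)⟩ + α·b(υ(t)) ≥ 0, and (∂h_r/∂x)(ξ(t),υ(t))·f(ξ(t),υ(t)) + (∂h_r/∂u)(ξ(t),υ(t))·υ'(t) + γ·h_r(ξ(t),υ(t)) ≥ 0. Then for every k ∈ {0, 1, …, r}: if b(υ(0)) ≥ 0 and h_i(ξ(0),υ(0)) ≥ 0 for all i ∈ {k, …, r}, then b(υ(t)) ≥ 0 and h_i(ξ(t),υ(t)) ≥ 0 for all t ≥ 0 and all i ∈ {k, …, r}. -/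

import Mathlib

open Set Filter Topology
open scoped RealInnerProductSpace

noncomputable def hseq {n m : ℕ}
    (f : EuclideanSpace ℝ (Fin n) × EuclideanSpace ℝ (Fin m) → EuclideanSpace ℝ (Fin n))
    (h : EuclideanSpace ℝ (Fin n) → ℝ) (β : ℝ) :
    ℕ → EuclideanSpace ℝ (Fin n) × EuclideanSpace ℝ (Fin m) → ℝ
  | 0 => fun p => h p.1
  | i + 1 => fun p =>
      fderiv ℝ (fun x => hseq f h β i (x, p.2)) p.1 (f p) + β * hseq f h β i p

noncomputable def Xset {n m : ℕ}
    (f : EuclideanSpace ℝ (Fin n) × EuclideanSpace ℝ (Fin m) → EuclideanSpace ℝ (Fin n))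
    (h : EuclideanSpace ℝ (Fin n) → ℝ) (b : EuclideanSpace ℝ (Fin m) → ℝ) (β : ℝ) (i : ℕ) :
    Set (EuclideanSpace ℝ (Fin n) × EuclideanSpace ℝ (Fin m)) :=
  {p | 0 ≤ h p.1 ∧ 0 ≤ b p.2 ∧ 0 ≤ hseq f h β i p}

/-- Grönwall-type lemma: if `g' + c·g ≥ 0` on `[0,∞)` and `g 0 ≥ 0`, then `g ≥ 0` on `[0,∞)`. -/
lemma nonneg_of_exists_hasDerivWithinAt {g : ℝ → ℝ} {c : ℝ}
    (hg : ∀ t ∈ Ici (0:ℝ), ∃ d, HasDerivWithinAt g d (Ici 0) t ∧ 0 ≤ d + c * g t)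
    (h0 : 0 ≤ g 0) : ∀ t ∈ Ici (0:ℝ), 0 ≤ g t := by
  choose! d hd1 hd2 using hg
  set G : ℝ → ℝ := fun t => Real.exp (c * t) * g t with hG
  have hG' : ∀ t ∈ Ici (0:ℝ),
      HasDerivWithinAt G (Real.exp (c*t) * (d t + c * g t)) (Ici 0) t := by
    intro t ht
    have h1 : HasDerivWithinAt (fun t => Real.exp (c*t)) (c * Real.exp (c*t)) (Ici 0) t := by
      simpa [mul_comm, Function.comp_def] using
        ((Real.hasDerivAt_exp (c*t)).comp t
          ((hasDerivAt_id t).const_mul c)).hasDerivWithinAt (s := Ici 0)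
    have h2 := h1.mul (hd1 t ht)
    exact h2.congr_deriv (by ring)
  have hmono : MonotoneOn G (Ici 0) := by
    apply monotoneOn_of_deriv_nonneg (convex_Ici 0)
    · exact fun t ht => (hG' t ht).continuousWithinAt
    · intro t ht
      rw [interior_Ici] at ht
      exact (((hG' t (Set.Ioi_subset_Ici_self ht)).hasDerivAt (Ici_mem_nhds ht)).differentiableAt).differentiableWithinAt
    · intro t ht
      rw [interior_Ici] at ht
      rw [((hG' t (Set.Ioi_subset_Ici_self ht)).hasDerivAt (Ici_mem_nhds ht)).deriv]
      exact mul_nonneg (Real.exp_nonneg _) (hd2 t (Set.Ioi_subset_Ici_self ht))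
  intro t ht
  have h1 : G 0 ≤ G t := hmono self_mem_Ici ht ht
  have h2 : (0:ℝ) ≤ G 0 := by simpa [hG] using h0
  have h3 : (0:ℝ) ≤ Real.exp (c*t) * g t := le_trans h2 h1
  nlinarith [Real.exp_pos (c*t)]

/-- Splitting the full Fréchet derivative of a function on a product into partial derivatives. -/
lemma fderiv_split {E F : Type*} [NormedAddCommGroup E] [NormedSpace ℝ E]
    [NormedAddCommGroup F] [NormedSpace ℝ F]
    (Φ : E × F → ℝ) (x : E) (u : F) (hΦ : DifferentiableAt ℝ Φ (x, u)) (a : E) (w : F) :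
    fderiv ℝ Φ (x, u) (a, w)
      = fderiv ℝ (fun y => Φ (y, u)) x a + fderiv ℝ (fun v => Φ (x, v)) u w := by
  have hq := hΦ.hasFDerivAt
  have hx : HasFDerivAt (fun y => Φ (y, u))
      ((fderiv ℝ Φ (x,u)).comp (ContinuousLinearMap.inl ℝ E F)) x :=
    hq.comp x (hasFDerivAt_prodMk_left x u)
  have hu : HasFDerivAt (fun v => Φ (x, v))
      ((fderiv ℝ Φ (x,u)).comp (ContinuousLinearMap.inr ℝ E F)) u :=
    hq.comp u (hasFDerivAt_prodMk_right x u)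
  rw [hx.fderiv, hu.fderiv]
  simp only [ContinuousLinearMap.coe_comp', Function.comp_apply,
    ContinuousLinearMap.inl_apply, ContinuousLinearMap.inr_apply]
  rw [← map_add]
  congr 1
  simp [Prod.ext_iff]

/-- Smoothness of the `hseq` family. -/
lemma hseq_contDiff {n m r : ℕ}
    (f : EuclideanSpace ℝ (Fin n) × EuclideanSpace ℝ (Fin m) → EuclideanSpace ℝ (Fin n))
    (h : EuclideanSpace ℝ (Fin n) → ℝ)
    (hf : ContDiff ℝ (r + 1 : ℕ) f) (hh : ContDiff ℝ (r + 2 : ℕ) h) (β : ℝ) :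
    ∀ i k : ℕ, i + k ≤ r + 2 → ContDiff ℝ (k : ℕ∞) (hseq f h β i) := by
  intro i
  induction i with
  | zero =>
    intro k hk
    have : ContDiff ℝ (k : ℕ∞) h := hh.of_le (Nat.cast_le.mpr (by omega))
    exact this.comp contDiff_fst
  | succ i ih =>
    intro k hk
    have h1 : ContDiff ℝ ((k + 1 : ℕ) : ℕ∞) (hseq f h β i) := ih (k+1) (by omega)
    have hfd : ContDiff ℝ (k : ℕ∞)
        (fun p : EuclideanSpace ℝ (Fin n) × EuclideanSpace ℝ (Fin m) =>
          fderiv ℝ (fun x => hseq f h β i (x, p.2)) p.1) := by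
      apply ContDiff.fderiv (f := fun (p : EuclideanSpace ℝ (Fin n) × EuclideanSpace ℝ (Fin m))
          (x : EuclideanSpace ℝ (Fin n)) => hseq f h β i (x, p.2))
        (g := Prod.fst) (m := ((k + 1 : ℕ) : ℕ∞))
      · exact h1.comp (contDiff_snd.prodMk (contDiff_snd.comp contDiff_fst))
      · exact contDiff_fst
      · push_cast; exact le_refl _
    have hfk : ContDiff ℝ (k : ℕ∞) f := hf.of_le (Nat.cast_le.mpr (by omega))
    have happ := hfd.clm_apply hfk
    have hmul : ContDiff ℝ (k : ℕ∞) (fun p => β * hseq f h β i p) :=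
      contDiff_const.mul (h1.of_le (Nat.cast_le.mpr (by omega)))
    have hsum := happ.add hmul
    show ContDiff ℝ (k : ℕ∞) (hseq f h β (i+1))
    simp only [hseq]
    exact hsum

/-- Nested forward invariance (strengthening of Proposition 1): for every `k ∈ {0,…,r}`, the set
`{(x,u) : b(u) ≥ 0, h_i(x,u) ≥ 0 for all k ≤ i ≤ r}` is forward invariant along solutions of the
plant whose control input satisfies the two CBF inequalities. -/
theorem nested_forward_invariance
    {n m r : ℕ} (hn : 0 < n) (hm : 0 < m) (hr : 0 < r)
    (f : EuclideanSpace ℝ (Fin n) × EuclideanSpace ℝ (Fin m) → EuclideanSpace ℝ (Fin n))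
    (h : EuclideanSpace ℝ (Fin n) → ℝ) (b : EuclideanSpace ℝ (Fin m) → ℝ)
    (hf : ContDiff ℝ (r + 1 : ℕ) f) (hh : ContDiff ℝ (r + 2 : ℕ) h) (hb : ContDiff ℝ 2 b)
    (β : ℝ) (hβ : 0 < β)
    (hrel : ∀ (p : EuclideanSpace ℝ (Fin n) × EuclideanSpace ℝ (Fin m)), ∀ i < r,
      fderiv ℝ (fun u => hseq f h β i (p.1, u)) p.2 = 0)
    (α γ : ℝ) (hα : 0 < α) (hγ : 0 < γ)
    (ξ : ℝ → EuclideanSpace ℝ (Fin n)) (υ : ℝ → EuclideanSpace ℝ (Fin m))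
    (hode : ∀ t ∈ Ici (0 : ℝ), ∃ v : EuclideanSpace ℝ (Fin m),
      HasDerivWithinAt ξ (f (ξ t, υ t)) (Ici 0) t ∧
      HasDerivWithinAt υ v (Ici 0) t ∧
      0 ≤ ⟪gradient b (υ t), v⟫ + α * b (υ t) ∧
      0 ≤ fderiv ℝ (fun x => hseq f h β r (x, υ t)) (ξ t) (f (ξ t, υ t))
        + fderiv ℝ (fun u => hseq f h β r (ξ t, u)) (υ t) v + γ * hseq f h β r (ξ t, υ t)) :
    ∀ k ≤ r,
      (0 ≤ b (υ 0) ∧ ∀ i, k ≤ i → i ≤ r → 0 ≤ hseq f h β i (ξ 0, υ 0)) →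
      ∀ t ∈ Ici (0 : ℝ),
        0 ≤ b (υ t) ∧ ∀ i, k ≤ i → i ≤ r → 0 ≤ hseq f h β i (ξ t, υ t) := by
  -- differentiability of each hseq i, i ≤ r+1
  have hdiff : ∀ i ≤ r + 1, Differentiable ℝ (hseq f h β i) := by
    intro i hi
    have := hseq_contDiff f h hf hh β i 1 (by omega)
    exact this.differentiable (by simp)
  -- derivative of t ↦ hseq i (ξ t, υ t) along the flow
  have hchain : ∀ i ≤ r, ∀ t ∈ Ici (0:ℝ),
      ∀ v : EuclideanSpace ℝ (Fin m),
      HasDerivWithinAt ξ (f (ξ t, υ t)) (Ici 0) t →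
      HasDerivWithinAt υ v (Ici 0) t →
      HasDerivWithinAt (fun s => hseq f h β i (ξ s, υ s))
        (fderiv ℝ (fun x => hseq f h β i (x, υ t)) (ξ t) (f (ξ t, υ t))
          + fderiv ℝ (fun u => hseq f h β i (ξ t, u)) (υ t) v) (Ici 0) t := by
    intro i hi t ht v hξ' hυ'
    have hdi : DifferentiableAt ℝ (hseq f h β i) (ξ t, υ t) :=
      (hdiff i (by omega)) _
    have hcomp := hdi.hasFDerivAt.comp_hasDerivWithinAt t (hξ'.prodMk hυ')
    have hsplit := fderiv_split (hseq f h β i) (ξ t) (υ t) hdi (f (ξ t, υ t)) v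
    rw [← hsplit]
    exact hcomp
  -- b stays nonnegative
  have hbpos : 0 ≤ b (υ 0) → ∀ t ∈ Ici (0:ℝ), 0 ≤ b (υ t) := by
    intro hb0
    apply nonneg_of_exists_hasDerivWithinAt (c := α) _ hb0
    intro t ht
    obtain ⟨v, hξ', hυ', hbv, _⟩ := hode t ht
    have hbd : DifferentiableAt ℝ b (υ t) :=
      (hb.differentiable (by norm_num)) _
    refine ⟨fderiv ℝ b (υ t) v, hbd.hasFDerivAt.comp_hasDerivWithinAt t hυ', ?_⟩
    have hgrad : ⟪gradient b (υ t), v⟫ = fderiv ℝ b (υ t) v := by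
      rw [gradient, ← InnerProductSpace.toDual_apply_apply,
        LinearIsometryEquiv.apply_symm_apply]
    rw [← hgrad]
    exact hbv
  -- nested nonnegativity of hseq i
  have key : ∀ j i, i ≤ r → r - i = j →
      (∀ l, i ≤ l → l ≤ r → 0 ≤ hseq f h β l (ξ 0, υ 0)) →
      ∀ t ∈ Ici (0:ℝ), 0 ≤ hseq f h β i (ξ t, υ t) := by
    intro j
    induction j with
    | zero =>
      intro i hi hij h0
      have hir : i = r := by omega
      subst hir
      apply nonneg_of_exists_hasDerivWithinAt (c := γ) _ (h0 i le_rfl le_rfl)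
      intro t ht
      obtain ⟨v, hξ', hυ', _, hhr⟩ := hode t ht
      exact ⟨_, hchain i le_rfl t ht v hξ' hυ', by linarith [hhr]⟩
    | succ j ih =>
      intro i hi hij h0
      have hilt : i < r := by omega
      have hnext : ∀ t ∈ Ici (0:ℝ), 0 ≤ hseq f h β (i+1) (ξ t, υ t) :=
        ih (i+1) (by omega) (by omega) (fun l hl1 hl2 => h0 l (by omega) hl2)
      apply nonneg_of_exists_hasDerivWithinAt (c := β) _ (h0 i le_rfl hi)
      intro t ht
      obtain ⟨v, hξ', hυ', _, _⟩ := hode t ht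
      refine ⟨_, hchain i hi t ht v hξ' hυ', ?_⟩
      have hzero : fderiv ℝ (fun u => hseq f h β i (ξ t, u)) (υ t) v = 0 := by
        have := hrel (ξ t, υ t) i hilt
        simp only at this
        rw [this]
        rfl
      have hdef : hseq f h β (i+1) (ξ t, υ t)
          = fderiv ℝ (fun x => hseq f h β i (x, υ t)) (ξ t) (f (ξ t, υ t))
            + β * hseq f h β i (ξ t, υ t) := by
        simp [hseq]
      have h1 := hnext t ht
      rw [hdef] at h1
      rw [hzero]
      linarith
  intro k hk hinit t ht
  obtain ⟨hb0, hh0⟩ := hinit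
  refine ⟨hbpos hb0 t ht, fun i hki hir => ?_⟩
  exact key (r - i) i hir rfl (fun l hl1 hl2 => hh0 l (le_trans hki hl1) hl2) t ht
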